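/- (Proposition 5, relative near-optimality.) Under Condition 1 and Assumption SA1, let α ∈ (0,1) satisfy αP̄ ⪯ Q_i for all i ∈ 𝕄 and α₀ > 0 satisfy α₀(P̄ − P̲) ⪯ Q_i for all i ∈ 𝕄. Then for every integer d > 1 and every x ∈ ℝⁿ with x ≠ 0, the value V*(x) is finite and strictly positive, and (V*(x) − V*_d(x)) / V*(x) ≤ (1/α₀)·(1−α)^{d−1}. -/

import Mathlib

open Matrix Filter
open scoped ENNReal

/-- Data of a switched linear-quadratic problem with `M` modes,
state dimension `n` and continuous-input dimension `m`. -/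
structure SwitchedLQR (n m M : ℕ) where
  A : Fin M → Matrix (Fin n) (Fin n) ℝ
  B : Fin M → Matrix (Fin n) (Fin m) ℝ
  Q : Fin M → Matrix (Fin n) (Fin n) ℝ
  R : Fin M → Matrix (Fin m) (Fin m) ℝ

namespace SwitchedLQR

variable {n m M : ℕ}

/-- Stage cost `ℓ(x,u,i) = xᵀQᵢx + uᵀRᵢu`. -/
def ell (S : SwitchedLQR n m M) (x : Fin n → ℝ) (u : Fin m → ℝ) (i : Fin M) : ℝ :=
  x ⬝ᵥ ((S.Q i) *ᵥ x) + u ⬝ᵥ ((S.R i) *ᵥ u)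

/-- Riccati operator `𝓡ᵢ(P)`. -/
noncomputable def Ric (S : SwitchedLQR n m M) (i : Fin M)
    (P : Matrix (Fin n) (Fin n) ℝ) : Matrix (Fin n) (Fin n) ℝ :=
  S.Q i + (S.A i)ᵀ * P * S.A i -
    (S.A i)ᵀ * P * S.B i * (S.R i + (S.B i)ᵀ * P * S.B i)⁻¹ * ((S.B i)ᵀ * P * S.A i)

/-- `P_𝐢 = 𝓡_{i₀}(𝓡_{i₁}(⋯𝓡_{i_{d-1}}(P̲)⋯))` for a finite mode sequence `𝐢`. -/
noncomputable def Pseq (S : SwitchedLQR n m M) (Pund : Matrix (Fin n) (Fin n) ℝ)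
    (l : List (Fin M)) : Matrix (Fin n) (Fin n) ℝ :=
  l.foldr S.Ric Pund

/-- Solution `φ(k,x,u,i)` of the switched linear system. -/
def phi (S : SwitchedLQR n m M) (x : Fin n → ℝ) (u : ℕ → Fin m → ℝ) (is : ℕ → Fin M) :
    ℕ → Fin n → ℝ
  | 0 => x
  | k + 1 => S.A (is k) *ᵥ (phi S x u is k) + S.B (is k) *ᵥ (u k)

/-- Finite-horizon cost `J_d` with terminal cost matrix `P̲`. -/
noncomputable def Jd (S : SwitchedLQR n m M) (Pund : Matrix (Fin n) (Fin n) ℝ) (d : ℕ)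
    (x : Fin n → ℝ) (u : ℕ → Fin m → ℝ) (is : ℕ → Fin M) : ℝ :=
  (∑ k ∈ Finset.range d, S.ell (S.phi x u is k) (u k) (is k)) +
    (S.phi x u is d) ⬝ᵥ (Pund *ᵥ (S.phi x u is d))

/-- Infinite-horizon cost `J(x,u,i) ∈ [0,∞]`. -/
noncomputable def Jinf (S : SwitchedLQR n m M) (x : Fin n → ℝ) (u : ℕ → Fin m → ℝ)
    (is : ℕ → Fin M) : ℝ≥0∞ :=
  ∑' k : ℕ, ENNReal.ofReal (S.ell (S.phi x u is k) (u k) (is k))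

/-- Optimal value function `V*(x)`. -/
noncomputable def Vstar (S : SwitchedLQR n m M) (x : Fin n → ℝ) : ℝ≥0∞ :=
  ⨅ (u : ℕ → Fin m → ℝ) (is : ℕ → Fin M), S.Jinf x u is

/-- `V*_d(x)`: minimum over length-`d` mode sequences `𝐢` of `xᵀP_𝐢x`. -/
noncomputable def Vd (S : SwitchedLQR n m M) (Pund : Matrix (Fin n) (Fin n) ℝ) (d : ℕ)
    (x : Fin n → ℝ) : ℝ :=
  sInf {r : ℝ | ∃ l : List (Fin M), l.length = d ∧ r = x ⬝ᵥ ((S.Pseq Pund l) *ᵥ x)}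

/-- Condition 1: the LMI block matrix is positive semi-definite for every mode. -/
def Cond1 (S : SwitchedLQR n m M) (Pund : Matrix (Fin n) (Fin n) ℝ) : Prop :=
  ∀ i : Fin M,
    (Matrix.fromBlocks
      ((S.A i)ᵀ * Pund * S.A i - Pund + S.Q i) ((S.A i)ᵀ * Pund * S.B i)
      ((S.B i)ᵀ * Pund * S.A i) (S.R i + (S.B i)ᵀ * Pund * S.B i)).PosSemidef

/-- Assumption SA1. -/
def SA1 (S : SwitchedLQR n m M) (Pbar : Matrix (Fin n) (Fin n) ℝ) : Prop :=
  Pbar.PosDef ∧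
    ∀ x : Fin n → ℝ, ∃ (u : ℕ → Fin m → ℝ) (is : ℕ → Fin M),
      S.Jinf x u is = S.Vstar x ∧ S.Vstar x ≤ ENNReal.ofReal (x ⬝ᵥ (Pbar *ᵥ x))

/-- `H*_d(x)`. -/
noncomputable def HStar (S : SwitchedLQR n m M) (Pund : Matrix (Fin n) (Fin n) ℝ) (d : ℕ)
    (x : Fin n → ℝ) : Set ((Fin m → ℝ) × Fin M) :=
  {p | S.Vd Pund d x =
        S.ell x p.1 p.2 + S.Vd Pund (d - 1) (S.A p.2 *ᵥ x + S.B p.2 *ᵥ p.1)}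

/-- `F_d(x)`. -/
noncomputable def Fd (S : SwitchedLQR n m M) (Pund : Matrix (Fin n) (Fin n) ℝ) (d : ℕ)
    (x : Fin n → ℝ) : Set (Fin n → ℝ) :=
  {y | ∃ p ∈ S.HStar Pund d x, y = S.A p.2 *ᵥ x + S.B p.2 *ᵥ p.1}

end SwitchedLQR

section AuxHelpers

lemma dot_tA {n m : ℕ} (Mx : Matrix (Fin m) (Fin n) ℝ) (v : Fin n → ℝ) (z : Fin m → ℝ) :
    v ⬝ᵥ (Mxᵀ *ᵥ z) = (Mx *ᵥ v) ⬝ᵥ z := by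
  rw [Matrix.dotProduct_mulVec, Matrix.vecMul_transpose]

lemma dot_symm {n : ℕ} {P : Matrix (Fin n) (Fin n) ℝ} (hP : Pᵀ = P) (v z : Fin n → ℝ) :
    v ⬝ᵥ (P *ᵥ z) = z ⬝ᵥ (P *ᵥ v) := by
  conv_lhs => rw [← hP]
  rw [dot_tA, dotProduct_comm]

lemma herm_t {k : ℕ} {P : Matrix (Fin k) (Fin k) ℝ} (hP : P.IsHermitian) : Pᵀ = P := by
  rw [← conjTranspose_eq_transpose_of_trivial]; exact hP.eq

lemma psd_q {k : ℕ} {P : Matrix (Fin k) (Fin k) ℝ} (hP : P.PosSemidef) (x : Fin k → ℝ) :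
    0 ≤ x ⬝ᵥ (P *ᵥ x) := by simpa using hP.dotProduct_mulVec_nonneg x

lemma pd_q {k : ℕ} {P : Matrix (Fin k) (Fin k) ℝ} (hP : P.PosDef) {x : Fin k → ℝ}
    (hx : x ≠ 0) : 0 < x ⬝ᵥ (P *ᵥ x) := by simpa using hP.dotProduct_mulVec_pos hx

/-- upper coercivity bound for a quadratic form -/
lemma quad_upper {k : ℕ} (P : Matrix (Fin k) (Fin k) ℝ) :
    ∃ C : ℝ, 0 ≤ C ∧ ∀ v : Fin k → ℝ, v ⬝ᵥ (P *ᵥ v) ≤ C * (v ⬝ᵥ v) := by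
  refine ⟨∑ i, ∑ j, |P i j|, by positivity, fun v => ?_⟩
  have hvv : ∀ i j : Fin k, v i * (P i j * v j) ≤ |P i j| * (v ⬝ᵥ v) := by
    intro i j
    have h1 : v i * (P i j * v j) ≤ |P i j| * |v i * v j| := by
      calc v i * (P i j * v j) ≤ |v i * (P i j * v j)| := le_abs_self _
      _ = |P i j| * |v i * v j| := by rw [abs_mul, abs_mul, abs_mul]; ring
    refine h1.trans (mul_le_mul_of_nonneg_left ?_ (abs_nonneg _))
    have h2 : |v i * v j| ≤ (v i ^ 2 + v j ^ 2) / 2 := by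
      rw [abs_mul]
      nlinarith [sq_nonneg (|v i| - |v j|), sq_abs (v i), sq_abs (v j)]
    have h3 : ∀ a : Fin k, v a ^ 2 ≤ v ⬝ᵥ v := by
      intro a
      have := Finset.single_le_sum (f := fun b => v b * v b)
        (fun b _ => mul_self_nonneg (v b)) (Finset.mem_univ a)
      simpa [dotProduct, sq] using this
    linarith [h3 i, h3 j]
  calc v ⬝ᵥ (P *ᵥ v) = ∑ i, ∑ j, v i * (P i j * v j) := by
        simp [dotProduct, Matrix.mulVec, Finset.mul_sum]
  _ ≤ ∑ i, ∑ j, |P i j| * (v ⬝ᵥ v) := by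
        refine Finset.sum_le_sum fun i _ => Finset.sum_le_sum fun j _ => hvv i j
  _ = (∑ i, ∑ j, |P i j|) * (v ⬝ᵥ v) := by rw [Finset.sum_mul]; simp [Finset.sum_mul]

lemma dot_self_nonneg {k : ℕ} (v : Fin k → ℝ) : 0 ≤ v ⬝ᵥ v :=
  Finset.sum_nonneg fun i _ => mul_self_nonneg (v i)

/-- lower coercivity bound for a positive definite quadratic form -/
lemma quad_lower {k : ℕ} (hk : 0 < k) {P : Matrix (Fin k) (Fin k) ℝ} (hP : P.PosDef) :
    ∃ c : ℝ, 0 < c ∧ ∀ v : Fin k → ℝ, c * (v ⬝ᵥ v) ≤ v ⬝ᵥ (P *ᵥ v) := by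
  have hcont : Continuous fun v : Fin k → ℝ => v ⬝ᵥ (P *ᵥ v) := by
    simp only [dotProduct, Matrix.mulVec]
    exact continuous_finset_sum _ fun i _ => (continuous_apply i).mul
      (continuous_finset_sum _ fun j _ => continuous_const.mul (continuous_apply j))
  have hcont2 : Continuous fun v : Fin k → ℝ => v ⬝ᵥ v :=
    continuous_finset_sum _ fun i _ => (continuous_apply i).mul (continuous_apply i)
  set Sp : Set (Fin k → ℝ) := {v | v ⬝ᵥ v = 1} with hSp
  have hclosed : IsClosed Sp := isClosed_eq hcont2 continuous_const
  have hbdd : Bornology.IsBounded Sp := by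
    apply Bornology.IsBounded.subset (Metric.isBounded_closedBall (x := 0) (r := 1))
    intro v hv
    simp only [Metric.mem_closedBall, dist_zero_right]
    rw [pi_norm_le_iff_of_nonneg zero_le_one]
    intro i
    rw [Real.norm_eq_abs, abs_le]
    have h3 : v i * v i ≤ 1 := by
      have h4 := Finset.single_le_sum (f := fun b => v b * v b)
        (fun b _ => mul_self_nonneg (v b)) (Finset.mem_univ i)
      have h5 : v ⬝ᵥ v = 1 := hv
      calc v i * v i ≤ v ⬝ᵥ v := h4
      _ = 1 := h5
    constructor <;> nlinarith
  have hcomp : IsCompact Sp := Metric.isCompact_of_isClosed_isBounded hclosed hbdd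
  have hne : Sp.Nonempty := by
    refine ⟨Pi.single ⟨0, hk⟩ 1, ?_⟩
    simp [hSp, dotProduct, Pi.single_apply]
  obtain ⟨v0, hv0Sp, hv0min'⟩ := hcomp.exists_isMinOn hne hcont.continuousOn
  have hv0min : ∀ w ∈ Sp, v0 ⬝ᵥ (P *ᵥ v0) ≤ w ⬝ᵥ (P *ᵥ w) := fun w hw => hv0min' hw
  have hv0ne : v0 ≠ 0 := by
    intro h
    rw [h] at hv0Sp
    simp [hSp, dotProduct] at hv0Sp
  refine ⟨v0 ⬝ᵥ (P *ᵥ v0), pd_q hP hv0ne, fun v => ?_⟩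
  rcases eq_or_ne v 0 with rfl | hv
  · simp
  · have ht : 0 < v ⬝ᵥ v := by
      rcases lt_or_eq_of_le (dot_self_nonneg v) with h | h
      · exact h
      · exact absurd (dotProduct_self_eq_zero.mp h.symm) hv
    set t : ℝ := v ⬝ᵥ v with htdef
    set w : Fin k → ℝ := (Real.sqrt t)⁻¹ • v with hwdef
    have hst : Real.sqrt t > 0 := Real.sqrt_pos.mpr ht
    have hwSp : w ∈ Sp := by
      show w ⬝ᵥ w = 1
      simp only [hwdef, smul_dotProduct, dotProduct_smul, smul_eq_mul, ← htdef]
      rw [← mul_assoc, ← mul_inv, Real.mul_self_sqrt ht.le]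
      exact inv_mul_cancel₀ ht.ne'
    have := hv0min w hwSp
    have hq : w ⬝ᵥ (P *ᵥ w) = ((Real.sqrt t)⁻¹ * (Real.sqrt t)⁻¹) * (v ⬝ᵥ (P *ᵥ v)) := by
      simp only [hwdef, smul_dotProduct, Matrix.mulVec_smul, dotProduct_smul]
      rw [smul_eq_mul, smul_eq_mul, mul_assoc]
    rw [hq] at this
    have hts : (Real.sqrt t)⁻¹ * (Real.sqrt t)⁻¹ = t⁻¹ := by
      rw [← mul_inv]
      rw [Real.mul_self_sqrt (le_of_lt ht)]
    rw [hts] at this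
    calc (v0 ⬝ᵥ (P *ᵥ v0)) * t ≤ (t⁻¹ * (v ⬝ᵥ (P *ᵥ v))) * t := by
          exact mul_le_mul_of_nonneg_right this (le_of_lt ht)
    _ = v ⬝ᵥ (P *ᵥ v) := by field_simp


lemma sq_identity {n m : ℕ} (A : Matrix (Fin n) (Fin n) ℝ) (B : Matrix (Fin n) (Fin m) ℝ)
    (Q P : Matrix (Fin n) (Fin n) ℝ) (R : Matrix (Fin m) (Fin m) ℝ)
    (hP : P.PosSemidef) (hR : R.PosDef) (x : Fin n → ℝ) (u : Fin m → ℝ) :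
    x ⬝ᵥ (Q *ᵥ x) + u ⬝ᵥ (R *ᵥ u)
      + (A *ᵥ x + B *ᵥ u) ⬝ᵥ (P *ᵥ (A *ᵥ x + B *ᵥ u))
      = x ⬝ᵥ ((Q + Aᵀ*P*A - Aᵀ*P*B*(R + Bᵀ*P*B)⁻¹*(Bᵀ*P*A)) *ᵥ x)
        + (u + (R + Bᵀ*P*B)⁻¹ *ᵥ (Bᵀ *ᵥ (P *ᵥ (A *ᵥ x)))) ⬝ᵥ
            ((R + Bᵀ*P*B) *ᵥ (u + (R + Bᵀ*P*B)⁻¹ *ᵥ (Bᵀ *ᵥ (P *ᵥ (A *ᵥ x))))) := by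
  have hPt : Pᵀ = P := herm_t hP.isHermitian
  have hBPB : (Bᵀ*P*B).PosSemidef := by
    have := hP.conjTranspose_mul_mul_same B
    rwa [conjTranspose_eq_transpose_of_trivial] at this
  have hSm : (R + Bᵀ*P*B).PosDef := hR.add_posSemidef hBPB
  set Sm := R + Bᵀ*P*B with hSmdef
  have hSmt : Smᵀ = Sm := herm_t hSm.isHermitian
  have hSG : Sm * Sm⁻¹ = 1 := Matrix.mul_nonsing_inv _ (hSm.det_pos.ne'.isUnit)
  set a := A *ᵥ x with ha
  set w0 := Bᵀ *ᵥ (P *ᵥ a) with hw0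
  have h4 : Sm *ᵥ (Sm⁻¹ *ᵥ w0) = w0 := by rw [Matrix.mulVec_mulVec, hSG, Matrix.one_mulVec]
  have h1 : a ⬝ᵥ (P *ᵥ (B *ᵥ u)) = u ⬝ᵥ w0 := by
    rw [dot_symm hPt, hw0, dot_tA]
  have h2 : (B *ᵥ u) ⬝ᵥ (P *ᵥ a) = u ⬝ᵥ w0 := by rw [hw0, dot_tA]
  have h3 : (B *ᵥ u) ⬝ᵥ (P *ᵥ (B *ᵥ u)) = u ⬝ᵥ (Bᵀ *ᵥ (P *ᵥ (B *ᵥ u))) := by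
    rw [dot_tA]
  have h5 : (Sm⁻¹ *ᵥ w0) ⬝ᵥ (Sm *ᵥ u) = u ⬝ᵥ w0 := by
    rw [dot_symm hSmt, h4]
  have h6 : (Sm⁻¹ *ᵥ w0) ⬝ᵥ (Sm *ᵥ (Sm⁻¹ *ᵥ w0)) = w0 ⬝ᵥ (Sm⁻¹ *ᵥ w0) := by
    rw [h4, dotProduct_comm]
  have h7 : a ⬝ᵥ (P *ᵥ (B *ᵥ (Sm⁻¹ *ᵥ w0))) = w0 ⬝ᵥ (Sm⁻¹ *ᵥ w0) := by
    rw [dot_symm hPt, ← dot_tA B (Sm⁻¹ *ᵥ w0) (P *ᵥ a), ← hw0, dotProduct_comm]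
  simp only [Matrix.add_mulVec, Matrix.sub_mulVec, Matrix.mulVec_add, dotProduct_add,
    add_dotProduct, dotProduct_sub, sub_dotProduct, ← Matrix.mulVec_mulVec]
  simp only [← ha, ← hw0, dot_tA A x, ← ha]
  have h8 : u ⬝ᵥ (Sm *ᵥ u) = u ⬝ᵥ (R *ᵥ u) + u ⬝ᵥ (Bᵀ *ᵥ (P *ᵥ (B *ᵥ u))) := by
    rw [hSmdef, Matrix.add_mulVec, dotProduct_add]
    simp only [← Matrix.mulVec_mulVec]
  rw [h1, h2, h3, h5, h6, h7, h4, h8]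
  ring

end AuxHelpers

namespace SwitchedLQR

variable {n m M : ℕ}

/-- the optimal one-step input -/
noncomputable def ustar (S : SwitchedLQR n m M) (i : Fin M) (P : Matrix (Fin n) (Fin n) ℝ)
    (x : Fin n → ℝ) : Fin m → ℝ :=
  -((S.R i + (S.B i)ᵀ * P * S.B i)⁻¹ *ᵥ ((S.B i)ᵀ *ᵥ (P *ᵥ (S.A i *ᵥ x))))

lemma Smat_posDef (S : SwitchedLQR n m M) (i : Fin M) {P : Matrix (Fin n) (Fin n) ℝ}
    (hP : P.PosSemidef) (hR : (S.R i).PosDef) :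
    (S.R i + (S.B i)ᵀ * P * S.B i).PosDef := by
  have hBPB : ((S.B i)ᵀ * P * S.B i).PosSemidef := by
    have := hP.conjTranspose_mul_mul_same (S.B i)
    rwa [conjTranspose_eq_transpose_of_trivial] at this
  exact hR.add_posSemidef hBPB

lemma Ric_aux (S : SwitchedLQR n m M) (i : Fin M) {P : Matrix (Fin n) (Fin n) ℝ}
    (hP : P.PosSemidef) (hR : (S.R i).PosDef) (x : Fin n → ℝ) (u : Fin m → ℝ) :
    S.ell x u i + (S.A i *ᵥ x + S.B i *ᵥ u) ⬝ᵥ (P *ᵥ (S.A i *ᵥ x + S.B i *ᵥ u))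
      = x ⬝ᵥ (S.Ric i P *ᵥ x)
        + (u - S.ustar i P x) ⬝ᵥ
            ((S.R i + (S.B i)ᵀ * P * S.B i) *ᵥ (u - S.ustar i P x)) := by
  have h := sq_identity (S.A i) (S.B i) (S.Q i) P (S.R i) hP hR x u
  unfold ell Ric ustar
  rw [sub_neg_eq_add]
  linarith [h]

lemma Ric_le (S : SwitchedLQR n m M) (i : Fin M) {P : Matrix (Fin n) (Fin n) ℝ}
    (hP : P.PosSemidef) (hR : (S.R i).PosDef) (x : Fin n → ℝ) (u : Fin m → ℝ) :
    x ⬝ᵥ (S.Ric i P *ᵥ x)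
      ≤ S.ell x u i + (S.A i *ᵥ x + S.B i *ᵥ u) ⬝ᵥ (P *ᵥ (S.A i *ᵥ x + S.B i *ᵥ u)) := by
  have h := S.Ric_aux i hP hR x u
  have h2 := psd_q (S.Smat_posDef i hP hR).posSemidef (u - S.ustar i P x)
  linarith

lemma Ric_eq (S : SwitchedLQR n m M) (i : Fin M) {P : Matrix (Fin n) (Fin n) ℝ}
    (hP : P.PosSemidef) (hR : (S.R i).PosDef) (x : Fin n → ℝ) :
    x ⬝ᵥ (S.Ric i P *ᵥ x)
      = S.ell x (S.ustar i P x) i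
        + (S.A i *ᵥ x + S.B i *ᵥ S.ustar i P x) ⬝ᵥ
            (P *ᵥ (S.A i *ᵥ x + S.B i *ᵥ S.ustar i P x)) := by
  have h := S.Ric_aux i hP hR x (S.ustar i P x)
  rw [sub_self] at h
  simp only [Matrix.mulVec_zero, dotProduct_zero, add_zero] at h
  linarith

lemma Ric_psd (S : SwitchedLQR n m M) (i : Fin M) {P : Matrix (Fin n) (Fin n) ℝ}
    (hQ : (S.Q i).PosDef) (hR : (S.R i).PosDef) (hP : P.PosSemidef) :
    (S.Ric i P).PosSemidef := by
  have hPt : Pᵀ = P := herm_t hP.isHermitian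
  have hQt : (S.Q i)ᵀ = S.Q i := herm_t hQ.isHermitian
  have hSmt : (S.R i + (S.B i)ᵀ * P * S.B i)ᵀ = S.R i + (S.B i)ᵀ * P * S.B i :=
    herm_t (S.Smat_posDef i hP hR).isHermitian
  have hGt : ((S.R i + (S.B i)ᵀ * P * S.B i)⁻¹)ᵀ = (S.R i + (S.B i)ᵀ * P * S.B i)⁻¹ := by
    rw [Matrix.transpose_nonsing_inv, hSmt]
  refine Matrix.PosSemidef.of_dotProduct_mulVec_nonneg ?_ ?_
  · rw [Matrix.IsHermitian, conjTranspose_eq_transpose_of_trivial]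
    unfold Ric
    simp only [Matrix.transpose_sub, Matrix.transpose_add, Matrix.transpose_mul,
      Matrix.transpose_transpose, hPt, hQt, hGt]
    simp only [Matrix.mul_assoc]
  · intro y
    rw [star_trivial]
    rw [S.Ric_eq i hP hR y]
    have h1 : 0 ≤ S.ell y (S.ustar i P y) i :=
      add_nonneg (psd_q hQ.posSemidef y) (psd_q hR.posSemidef _)
    have h2 := psd_q hP (S.A i *ᵥ y + S.B i *ᵥ S.ustar i P y)
    linarith

lemma Pseq_cons (S : SwitchedLQR n m M) (Pund : Matrix (Fin n) (Fin n) ℝ) (i : Fin M)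
    (l : List (Fin M)) : S.Pseq Pund (i :: l) = S.Ric i (S.Pseq Pund l) := rfl

lemma Pseq_psd (S : SwitchedLQR n m M) {Pund : Matrix (Fin n) (Fin n) ℝ}
    (hPund : Pund.PosSemidef) (hQ : ∀ i, (S.Q i).PosDef) (hR : ∀ i, (S.R i).PosDef) :
    ∀ l : List (Fin M), (S.Pseq Pund l).PosSemidef
  | [] => hPund
  | i :: l => S.Ric_psd i (hQ i) (hR i) (S.Pseq_psd hPund hQ hR l)

lemma ell_nonneg (S : SwitchedLQR n m M) {i : Fin M} (hQ : (S.Q i).PosDef)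
    (hR : (S.R i).PosDef) (x : Fin n → ℝ) (u : Fin m → ℝ) : 0 ≤ S.ell x u i :=
  add_nonneg (psd_q hQ.posSemidef x) (psd_q hR.posSemidef u)

lemma Q_le_ell (S : SwitchedLQR n m M) {i : Fin M} (hR : (S.R i).PosDef)
    (x : Fin n → ℝ) (u : Fin m → ℝ) : x ⬝ᵥ (S.Q i *ᵥ x) ≤ S.ell x u i :=
  le_add_of_nonneg_right (psd_q hR.posSemidef u)

lemma dot_sum_elim {a b : ℕ} (x p : Fin a → ℝ) (u q : Fin b → ℝ) :
    Sum.elim x u ⬝ᵥ Sum.elim p q = x ⬝ᵥ p + u ⬝ᵥ q := by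
  simp [dotProduct, Fintype.sum_sum_type]

lemma cond1_scalar (S : SwitchedLQR n m M) {Pund : Matrix (Fin n) (Fin n) ℝ}
    (hC : S.Cond1 Pund) (i : Fin M) (x : Fin n → ℝ) (u : Fin m → ℝ) :
    x ⬝ᵥ (Pund *ᵥ x)
      ≤ S.ell x u i + (S.A i *ᵥ x + S.B i *ᵥ u) ⬝ᵥ (Pund *ᵥ (S.A i *ᵥ x + S.B i *ᵥ u)) := by
  have h := (hC i).dotProduct_mulVec_nonneg (Sum.elim x u)
  rw [star_trivial, Matrix.fromBlocks_mulVec] at h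
  simp only [Sum.elim_comp_inl, Sum.elim_comp_inr, dot_sum_elim] at h
  unfold ell
  simp only [Matrix.add_mulVec, Matrix.sub_mulVec, Matrix.mulVec_add, dotProduct_add,
    add_dotProduct, dotProduct_sub, ← Matrix.mulVec_mulVec, dot_tA] at h ⊢
  linarith

end SwitchedLQR

section AuxHelpers2

lemma smul_quad_le {k : ℕ} {P1 P2 : Matrix (Fin k) (Fin k) ℝ} {c : ℝ}
    (h : (P1 - c • P2).PosSemidef) (x : Fin k → ℝ) :
    c * (x ⬝ᵥ (P2 *ᵥ x)) ≤ x ⬝ᵥ (P1 *ᵥ x) := by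
  have h2 := psd_q h x
  simp only [Matrix.sub_mulVec, dotProduct_sub, Matrix.smul_mulVec, dotProduct_smul,
    smul_eq_mul] at h2
  linarith

end AuxHelpers2

namespace SwitchedLQR

variable {n m M : ℕ}

lemma vd_set_finite (S : SwitchedLQR n m M) (Pund : Matrix (Fin n) (Fin n) ℝ) (d : ℕ)
    (x : Fin n → ℝ) :
    {r : ℝ | ∃ l : List (Fin M), l.length = d ∧ r = x ⬝ᵥ ((S.Pseq Pund l) *ᵥ x)}.Finite := by
  apply Set.Finite.subset (Set.finite_range
    (fun f : Fin d → Fin M => x ⬝ᵥ ((S.Pseq Pund (List.ofFn f)) *ᵥ x)))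
  rintro r ⟨l, hl, rfl⟩
  subst hl
  exact ⟨l.get, by simp [List.ofFn_get]⟩

lemma vd_set_nonempty (S : SwitchedLQR n m M) (hM : 0 < M) (Pund : Matrix (Fin n) (Fin n) ℝ)
    (d : ℕ) (x : Fin n → ℝ) :
    {r : ℝ | ∃ l : List (Fin M), l.length = d ∧ r = x ⬝ᵥ ((S.Pseq Pund l) *ᵥ x)}.Nonempty :=
  ⟨_, ⟨List.replicate d ⟨0, hM⟩, by simp, rfl⟩⟩

lemma vd_set_bddBelow (S : SwitchedLQR n m M) {Pund : Matrix (Fin n) (Fin n) ℝ}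
    (hPund : Pund.PosSemidef) (hQ : ∀ i, (S.Q i).PosDef) (hR : ∀ i, (S.R i).PosDef)
    (d : ℕ) (x : Fin n → ℝ) :
    BddBelow {r : ℝ | ∃ l : List (Fin M), l.length = d ∧ r = x ⬝ᵥ ((S.Pseq Pund l) *ᵥ x)} := by
  refine ⟨0, ?_⟩
  rintro r ⟨l, hl, rfl⟩
  exact psd_q (S.Pseq_psd hPund hQ hR l) x

lemma Vd_le (S : SwitchedLQR n m M) {Pund : Matrix (Fin n) (Fin n) ℝ}
    (hPund : Pund.PosSemidef) (hQ : ∀ i, (S.Q i).PosDef) (hR : ∀ i, (S.R i).PosDef)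
    {d : ℕ} (x : Fin n → ℝ) {l : List (Fin M)} (hl : l.length = d) :
    S.Vd Pund d x ≤ x ⬝ᵥ ((S.Pseq Pund l) *ᵥ x) :=
  csInf_le (S.vd_set_bddBelow hPund hQ hR d x) ⟨l, hl, rfl⟩

lemma Vd_attain (S : SwitchedLQR n m M) (hM : 0 < M) (Pund : Matrix (Fin n) (Fin n) ℝ)
    (d : ℕ) (x : Fin n → ℝ) :
    ∃ l : List (Fin M), l.length = d ∧ S.Vd Pund d x = x ⬝ᵥ ((S.Pseq Pund l) *ᵥ x) := by
  have h := (S.vd_set_nonempty hM Pund d x).csInf_mem (S.vd_set_finite Pund d x)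
  obtain ⟨l, hl, hr⟩ := h
  exact ⟨l, hl, hr⟩

lemma Vd_zero (S : SwitchedLQR n m M) (Pund : Matrix (Fin n) (Fin n) ℝ) (x : Fin n → ℝ) :
    S.Vd Pund 0 x = x ⬝ᵥ (Pund *ᵥ x) := by
  unfold Vd
  have hset : {r : ℝ | ∃ l : List (Fin M), l.length = 0 ∧ r = x ⬝ᵥ ((S.Pseq Pund l) *ᵥ x)}
      = {x ⬝ᵥ (Pund *ᵥ x)} := by
    ext r
    constructor
    · rintro ⟨l, hl, rfl⟩
      rw [List.length_eq_zero_iff] at hl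
      subst hl
      rfl
    · rintro rfl
      exact ⟨[], rfl, rfl⟩
  rw [hset, csInf_singleton]

lemma Vd_step (S : SwitchedLQR n m M) (hM : 0 < M) {Pund : Matrix (Fin n) (Fin n) ℝ}
    (hPund : Pund.PosSemidef) (hQ : ∀ i, (S.Q i).PosDef) (hR : ∀ i, (S.R i).PosDef)
    (d : ℕ) (x : Fin n → ℝ) (u : Fin m → ℝ) (i : Fin M) :
    S.Vd Pund (d+1) x ≤ S.ell x u i + S.Vd Pund d (S.A i *ᵥ x + S.B i *ᵥ u) := by
  obtain ⟨l, hl, hE⟩ := S.Vd_attain hM Pund d (S.A i *ᵥ x + S.B i *ᵥ u)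
  calc S.Vd Pund (d+1) x ≤ x ⬝ᵥ ((S.Pseq Pund (i :: l)) *ᵥ x) :=
        S.Vd_le hPund hQ hR x (by simp [hl])
  _ ≤ S.ell x u i + (S.A i *ᵥ x + S.B i *ᵥ u) ⬝ᵥ ((S.Pseq Pund l) *ᵥ (S.A i *ᵥ x + S.B i *ᵥ u)) := by
        rw [S.Pseq_cons]
        exact S.Ric_le i (S.Pseq_psd hPund hQ hR l) (hR i) x u
  _ = S.ell x u i + S.Vd Pund d (S.A i *ᵥ x + S.B i *ᵥ u) := by rw [hE]

lemma phi_shift (S : SwitchedLQR n m M) (x : Fin n → ℝ) (u : ℕ → Fin m → ℝ) (is : ℕ → Fin M) :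
    ∀ k : ℕ, S.phi x u is (k+1)
      = S.phi (S.A (is 0) *ᵥ x + S.B (is 0) *ᵥ u 0) (fun j => u (j+1)) (fun j => is (j+1)) k
  | 0 => rfl
  | k+1 => by
    show S.A (is (k+1)) *ᵥ (S.phi x u is (k+1)) + S.B (is (k+1)) *ᵥ (u (k+1)) = _
    rw [S.phi_shift x u is k]
    rfl

lemma Jinf_cons (S : SwitchedLQR n m M) (x : Fin n → ℝ) (u : ℕ → Fin m → ℝ) (is : ℕ → Fin M) :
    S.Jinf x u is = ENNReal.ofReal (S.ell x (u 0) (is 0))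
      + S.Jinf (S.A (is 0) *ᵥ x + S.B (is 0) *ᵥ u 0) (fun j => u (j+1)) (fun j => is (j+1)) := by
  unfold Jinf
  rw [tsum_eq_zero_add' ENNReal.summable]
  exact congrArg₂ _ rfl (tsum_congr fun k => by rw [S.phi_shift x u is k])

lemma Vstar_le_Jinf (S : SwitchedLQR n m M) (x : Fin n → ℝ) (u : ℕ → Fin m → ℝ)
    (is : ℕ → Fin M) : S.Vstar x ≤ S.Jinf x u is := by
  unfold Vstar
  exact iInf_le_of_le u (iInf_le _ is)

lemma Vstar_le_quad (S : SwitchedLQR n m M) {Pbar : Matrix (Fin n) (Fin n) ℝ}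
    (hSA : S.SA1 Pbar) (x : Fin n → ℝ) :
    S.Vstar x ≤ ENNReal.ofReal (x ⬝ᵥ (Pbar *ᵥ x)) := by
  obtain ⟨u, is, _, h⟩ := hSA.2 x
  exact h

lemma Vstar_ne_top (S : SwitchedLQR n m M) {Pbar : Matrix (Fin n) (Fin n) ℝ}
    (hSA : S.SA1 Pbar) (x : Fin n → ℝ) : S.Vstar x ≠ ⊤ :=
  ne_top_of_le_ne_top ENNReal.ofReal_ne_top (S.Vstar_le_quad hSA x)

lemma Vstar_toReal_le_quad (S : SwitchedLQR n m M) {Pbar : Matrix (Fin n) (Fin n) ℝ}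
    (hSA : S.SA1 Pbar) (x : Fin n → ℝ) :
    (S.Vstar x).toReal ≤ x ⬝ᵥ (Pbar *ᵥ x) :=
  ENNReal.toReal_le_of_le_ofReal (psd_q hSA.1.posSemidef x) (S.Vstar_le_quad hSA x)

lemma Vstar_step (S : SwitchedLQR n m M) {Pbar : Matrix (Fin n) (Fin n) ℝ}
    (hSA : S.SA1 Pbar) (x : Fin n → ℝ) (u0 : Fin m → ℝ) (i0 : Fin M) :
    S.Vstar x ≤ ENNReal.ofReal (S.ell x u0 i0) + S.Vstar (S.A i0 *ᵥ x + S.B i0 *ᵥ u0) := by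
  obtain ⟨u1, is1, hJ, _⟩ := hSA.2 (S.A i0 *ᵥ x + S.B i0 *ᵥ u0)
  have h := S.Jinf_cons x (fun k => Nat.casesOn k u0 u1) (fun k => Nat.casesOn k i0 is1)
  calc S.Vstar x ≤ S.Jinf x (fun k => Nat.casesOn k u0 u1) (fun k => Nat.casesOn k i0 is1) :=
        S.Vstar_le_Jinf x _ _
  _ = ENNReal.ofReal (S.ell x u0 i0) + S.Jinf (S.A i0 *ᵥ x + S.B i0 *ᵥ u0) u1 is1 := h
  _ = ENNReal.ofReal (S.ell x u0 i0) + S.Vstar (S.A i0 *ᵥ x + S.B i0 *ᵥ u0) := by rw [hJ]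

lemma Vstar_step_toReal (S : SwitchedLQR n m M) {Pbar : Matrix (Fin n) (Fin n) ℝ}
    (hSA : S.SA1 Pbar) (hQ : ∀ i, (S.Q i).PosDef) (hR : ∀ i, (S.R i).PosDef)
    (x : Fin n → ℝ) (u0 : Fin m → ℝ) (i0 : Fin M) :
    (S.Vstar x).toReal ≤ S.ell x u0 i0 + (S.Vstar (S.A i0 *ᵥ x + S.B i0 *ᵥ u0)).toReal := by
  have h := S.Vstar_step hSA x u0 i0
  have hyne := S.Vstar_ne_top hSA (S.A i0 *ᵥ x + S.B i0 *ᵥ u0)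
  have hne : ENNReal.ofReal (S.ell x u0 i0) + S.Vstar (S.A i0 *ᵥ x + S.B i0 *ᵥ u0) ≠ ⊤ :=
    ENNReal.add_ne_top.mpr ⟨ENNReal.ofReal_ne_top, hyne⟩
  have h2 := ENNReal.toReal_mono hne h
  rwa [ENNReal.toReal_add ENNReal.ofReal_ne_top hyne,
    ENNReal.toReal_ofReal (S.ell_nonneg (hQ i0) (hR i0) x u0)] at h2

lemma Vstar_ge_alpha (S : SwitchedLQR n m M) {Pbar : Matrix (Fin n) (Fin n) ℝ} {α : ℝ}
    (hαQ : ∀ i, (S.Q i - α • Pbar).PosSemidef) (hR : ∀ i, (S.R i).PosDef) (x : Fin n → ℝ) :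
    ENNReal.ofReal (α * (x ⬝ᵥ (Pbar *ᵥ x))) ≤ S.Vstar x := by
  refine le_iInf fun u => le_iInf fun is => ?_
  have h1 : α * (x ⬝ᵥ (Pbar *ᵥ x)) ≤ S.ell x (u 0) (is 0) :=
    (smul_quad_le (hαQ (is 0)) x).trans (S.Q_le_ell (hR (is 0)) x (u 0))
  calc ENNReal.ofReal (α * (x ⬝ᵥ (Pbar *ᵥ x)))
      ≤ ENNReal.ofReal (S.ell (S.phi x u is 0) (u 0) (is 0)) := ENNReal.ofReal_le_ofReal h1
  _ ≤ S.Jinf x u is := ENNReal.le_tsum 0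

end SwitchedLQR

namespace SwitchedLQR

variable {n m M : ℕ}

/-- the key lower-bound lemma: `V*_d(x) ≤ V*(x)` -/
lemma Vd_le_Vstar (S : SwitchedLQR n m M) (hn : 0 < n) (hM : 0 < M)
    (hQ : ∀ i, (S.Q i).PosDef) (hR : ∀ i, (S.R i).PosDef)
    {Pund : Matrix (Fin n) (Fin n) ℝ} (hPund : Pund.PosSemidef) (hC : S.Cond1 Pund)
    {Pbar : Matrix (Fin n) (Fin n) ℝ} (hSA : S.SA1 Pbar)
    {α : ℝ} (hα0 : 0 < α) (hαQ : ∀ i, (S.Q i - α • Pbar).PosSemidef)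
    (d : ℕ) (x : Fin n → ℝ) :
    S.Vd Pund d x ≤ (S.Vstar x).toReal := by
  obtain ⟨u, is, hJ, _⟩ := hSA.2 x
  have hJne : S.Jinf x u is ≠ ⊤ := by rw [hJ]; exact S.Vstar_ne_top hSA x
  have hL0 : ∀ (z : Fin n → ℝ) (uu : ℕ → Fin m → ℝ) (ii : ℕ → Fin M) (k : ℕ),
      0 ≤ S.ell (S.phi z uu ii k) (uu k) (ii k) :=
    fun z uu ii k => S.ell_nonneg (hQ _) (hR _) _ _
  have hsum : ∀ N : ℕ, ∑ k ∈ Finset.range N, S.ell (S.phi x u is k) (u k) (is k)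
      ≤ (S.Jinf x u is).toReal := by
    intro N
    rw [← ENNReal.ofReal_le_iff_le_toReal hJne,
      ENNReal.ofReal_sum_of_nonneg (fun k _ => hL0 x u is k)]
    exact ENNReal.sum_le_tsum _
  have hLsummable : Summable (fun k => S.ell (S.phi x u is k) (u k) (is k)) := by
    have h := ENNReal.summable_toReal hJne
    apply h.congr
    intro k
    rw [ENNReal.toReal_ofReal (hL0 x u is k)]
  have hLtend : Tendsto (fun k => S.ell (S.phi x u is k) (u k) (is k)) atTop (nhds 0) :=
    hLsummable.tendsto_atTop_zero
  obtain ⟨C, hC0, hCq⟩ := quad_upper Pund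
  obtain ⟨c, hc0, hcq⟩ := quad_lower hn hSA.1
  have hPhiBound : ∀ N, (S.phi x u is N) ⬝ᵥ (Pund *ᵥ (S.phi x u is N))
      ≤ (C / (c * α)) * S.ell (S.phi x u is N) (u N) (is N) := by
    intro N
    set v := S.phi x u is N with hv
    have h1 : v ⬝ᵥ (Pund *ᵥ v) ≤ C * (v ⬝ᵥ v) := hCq v
    have h2 : c * (v ⬝ᵥ v) ≤ v ⬝ᵥ (Pbar *ᵥ v) := hcq v
    have h3 : α * (v ⬝ᵥ (Pbar *ᵥ v)) ≤ v ⬝ᵥ (S.Q (is N) *ᵥ v) := smul_quad_le (hαQ (is N)) v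
    have h4 : v ⬝ᵥ (S.Q (is N) *ᵥ v) ≤ S.ell v (u N) (is N) := S.Q_le_ell (hR (is N)) v (u N)
    have e1 : (c*α) * (v ⬝ᵥ (Pund *ᵥ v)) ≤ (c*α) * (C * (v ⬝ᵥ v)) :=
      mul_le_mul_of_nonneg_left h1 (by positivity)
    have e3 : (C*α) * (c * (v ⬝ᵥ v)) ≤ (C*α) * (v ⬝ᵥ (Pbar *ᵥ v)) :=
      mul_le_mul_of_nonneg_left h2 (by positivity)
    have e5 : C * (α * (v ⬝ᵥ (Pbar *ᵥ v))) ≤ C * (v ⬝ᵥ (S.Q (is N) *ᵥ v)) :=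
      mul_le_mul_of_nonneg_left h3 hC0
    have e6 : C * (v ⬝ᵥ (S.Q (is N) *ᵥ v)) ≤ C * S.ell v (u N) (is N) :=
      mul_le_mul_of_nonneg_left h4 hC0
    rw [div_mul_eq_mul_div, le_div_iff₀ (by positivity : (0:ℝ) < c * α)]
    nlinarith [e1, e3, e5, e6]
  have hVdJ : ∀ (j : ℕ) (z : Fin n → ℝ) (uu : ℕ → Fin m → ℝ) (ii : ℕ → Fin M),
      S.Vd Pund j z ≤ (∑ k ∈ Finset.range j, S.ell (S.phi z uu ii k) (uu k) (ii k))
        + (S.phi z uu ii j) ⬝ᵥ (Pund *ᵥ (S.phi z uu ii j)) := by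
    intro j
    induction j with
    | zero =>
      intro z uu ii
      rw [S.Vd_zero Pund z]
      simp [phi]
    | succ j ih =>
      intro z uu ii
      have hstep := S.Vd_step hM hPund hQ hR j z (uu 0) (ii 0)
      have ihy := ih (S.A (ii 0) *ᵥ z + S.B (ii 0) *ᵥ uu 0) (fun k => uu (k+1)) (fun k => ii (k+1))
      have hsh : ∀ k, S.phi z uu ii (k+1)
          = S.phi (S.A (ii 0) *ᵥ z + S.B (ii 0) *ᵥ uu 0) (fun k => uu (k+1)) (fun k => ii (k+1)) k :=
        S.phi_shift z uu ii
      rw [Finset.sum_range_succ']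
      have hsumeq : (∑ k ∈ Finset.range j, S.ell (S.phi z uu ii (k+1)) (uu (k+1)) (ii (k+1)))
          = ∑ k ∈ Finset.range j, S.ell
              (S.phi (S.A (ii 0) *ᵥ z + S.B (ii 0) *ᵥ uu 0) (fun k => uu (k+1)) (fun k => ii (k+1)) k)
              (uu (k+1)) (ii (k+1)) := by
        refine Finset.sum_congr rfl fun k _ => ?_
        rw [hsh k]
      rw [hsumeq, hsh j]
      calc S.Vd Pund (j+1) z
          ≤ S.ell z (uu 0) (ii 0) + S.Vd Pund j (S.A (ii 0) *ᵥ z + S.B (ii 0) *ᵥ uu 0) := hstep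
      _ ≤ _ := by
          have h0 : S.phi z uu ii 0 = z := rfl
          rw [h0]
          linarith [ihy]
  have hVdN : ∀ jj : ℕ, S.Vd Pund d x
      ≤ (∑ k ∈ Finset.range (d+jj), S.ell (S.phi x u is k) (u k) (is k))
        + (S.phi x u is (d+jj)) ⬝ᵥ (Pund *ᵥ (S.phi x u is (d+jj))) := by
    intro jj
    induction jj with
    | zero => simpa using hVdJ d x u is
    | succ jj ih =>
      have hc1 := S.cond1_scalar hC (is (d+jj)) (S.phi x u is (d+jj)) (u (d+jj))
      have hphi : S.phi x u is (d+jj+1)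
          = S.A (is (d+jj)) *ᵥ (S.phi x u is (d+jj)) + S.B (is (d+jj)) *ᵥ (u (d+jj)) := rfl
      rw [show d + (jj+1) = (d+jj)+1 by ring, Finset.sum_range_succ, hphi]
      linarith [ih, hc1]
  have hVd_le : ∀ jj : ℕ, S.Vd Pund d x
      ≤ (S.Jinf x u is).toReal + (C / (c * α)) * S.ell (S.phi x u is (d+jj)) (u (d+jj)) (is (d+jj)) := by
    intro jj
    have h1 := hVdN jj
    have h2 := hPhiBound (d + jj)
    have h3 := hsum (d + jj)
    linarith
  have htend : Tendsto (fun jj : ℕ =>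
      (S.Jinf x u is).toReal + (C / (c * α)) * S.ell (S.phi x u is (d+jj)) (u (d+jj)) (is (d+jj)))
      atTop (nhds ((S.Jinf x u is).toReal + (C / (c * α)) * 0)) := by
    apply Tendsto.const_add
    apply Tendsto.const_mul
    have hcomp : Tendsto (fun jj : ℕ => d + jj) atTop atTop := by
      simpa [Nat.add_comm] using tendsto_add_atTop_nat d
    exact hLtend.comp hcomp
  have hfinal := ge_of_tendsto' htend hVd_le
  rw [hJ] at hfinal
  simpa using hfinal

/-- main induction: relative error bound along minimizing mode sequences -/
lemma main_claim (S : SwitchedLQR n m M)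
    (hQ : ∀ i, (S.Q i).PosDef) (hR : ∀ i, (S.R i).PosDef)
    {Pund : Matrix (Fin n) (Fin n) ℝ} (hPund : Pund.PosSemidef) (hC : S.Cond1 Pund)
    {Pbar : Matrix (Fin n) (Fin n) ℝ} (hSA : S.SA1 Pbar)
    {α : ℝ} (hα0 : 0 < α) (hα1 : α < 1)
    (hαQ : ∀ i, (S.Q i - α • Pbar).PosSemidef)
    {α₀ : ℝ} (hα₀ : 0 < α₀)
    (hα₀Q : ∀ i, (S.Q i - α₀ • (Pbar - Pund)).PosSemidef) :
    ∀ (l : List (Fin M)) (i : Fin M) (x : Fin n → ℝ),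
      x ⬝ᵥ ((S.Pseq Pund (i :: l)) *ᵥ x) ≤ (S.Vstar x).toReal →
      (S.Vstar x).toReal - x ⬝ᵥ ((S.Pseq Pund (i :: l)) *ᵥ x)
        ≤ (1/α₀) * (1-α)^(l.length) * (x ⬝ᵥ ((S.Pseq Pund (i :: l)) *ᵥ x)) := by
  intro l
  induction l with
  | nil =>
    intro i x hW
    have hRic := S.Ric_eq i hPund (hR i) x
    have hT : x ⬝ᵥ ((S.Pseq Pund [i]) *ᵥ x)
        = S.ell x (S.ustar i Pund x) i
          + (S.A i *ᵥ x + S.B i *ᵥ S.ustar i Pund x) ⬝ᵥ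
              (Pund *ᵥ (S.A i *ᵥ x + S.B i *ᵥ S.ustar i Pund x)) := hRic
    have h1 : (S.Vstar x).toReal ≤ x ⬝ᵥ (Pbar *ᵥ x) := S.Vstar_toReal_le_quad hSA x
    have h2 : α₀ * (x ⬝ᵥ ((Pbar - Pund) *ᵥ x)) ≤ x ⬝ᵥ (S.Q i *ᵥ x) := smul_quad_le (hα₀Q i) x
    have h3 : x ⬝ᵥ ((Pbar - Pund) *ᵥ x) = x ⬝ᵥ (Pbar *ᵥ x) - x ⬝ᵥ (Pund *ᵥ x) := by
      simp [Matrix.sub_mulVec, dotProduct_sub]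
    have h4 : x ⬝ᵥ (Pund *ᵥ x)
        ≤ S.ell x (S.ustar i Pund x) i
          + (S.A i *ᵥ x + S.B i *ᵥ S.ustar i Pund x) ⬝ᵥ
              (Pund *ᵥ (S.A i *ᵥ x + S.B i *ᵥ S.ustar i Pund x)) :=
      S.cond1_scalar hC i x (S.ustar i Pund x)
    have h5 : x ⬝ᵥ (S.Q i *ᵥ x) ≤ S.ell x (S.ustar i Pund x) i := S.Q_le_ell (hR i) x _
    have h6 : 0 ≤ (S.A i *ᵥ x + S.B i *ᵥ S.ustar i Pund x) ⬝ᵥ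
        (Pund *ᵥ (S.A i *ᵥ x + S.B i *ᵥ S.ustar i Pund x)) := psd_q hPund _
    simp only [List.length_nil, pow_zero, mul_one]
    rw [div_mul_eq_mul_div, one_mul, le_div_iff₀ hα₀]
    have key : α₀ * ((S.Vstar x).toReal - x ⬝ᵥ ((S.Pseq Pund [i]) *ᵥ x))
        ≤ α₀ * (x ⬝ᵥ ((Pbar - Pund) *ᵥ x)) := by
      apply mul_le_mul_of_nonneg_left _ hα₀.le
      rw [h3]
      linarith
    nlinarith [key, h2, h5, h6]
  | cons j l ih =>
    intro i x hW
    set P := S.Pseq Pund (j :: l) with hPdef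
    have hPpsd : P.PosSemidef := S.Pseq_psd hPund hQ hR (j :: l)
    set us := S.ustar i P x with husdef
    set y := S.A i *ᵥ x + S.B i *ᵥ us with hydef
    have hT : x ⬝ᵥ ((S.Pseq Pund (i :: j :: l)) *ᵥ x) = S.ell x us i + y ⬝ᵥ (P *ᵥ y) :=
      S.Ric_eq i hPpsd (hR i) x
    have hstep : (S.Vstar x).toReal ≤ S.ell x us i + (S.Vstar y).toReal :=
      S.Vstar_step_toReal hSA hQ hR x us i
    have hW' : y ⬝ᵥ (P *ᵥ y) ≤ (S.Vstar y).toReal := by linarith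
    have hQell : x ⬝ᵥ (S.Q i *ᵥ x) ≤ S.ell x us i := S.Q_le_ell (hR i) x us
    have hαV : α * (x ⬝ᵥ (Pbar *ᵥ x)) ≤ x ⬝ᵥ (S.Q i *ᵥ x) := smul_quad_le (hαQ i) x
    have hVq : (S.Vstar x).toReal ≤ x ⬝ᵥ (Pbar *ᵥ x) := S.Vstar_toReal_le_quad hSA x
    have hdecay : y ⬝ᵥ (P *ᵥ y) ≤ (1-α) * (x ⬝ᵥ ((S.Pseq Pund (i :: j :: l)) *ᵥ x)) := by
      nlinarith [mul_le_mul_of_nonneg_left (hW.trans hVq) hα0.le]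
    have hI := ih j y hW'
    have h1α : (0:ℝ) ≤ 1 - α := by linarith
    have hcoef : (0:ℝ) ≤ (1/α₀) * (1-α)^(l.length) := mul_nonneg (by positivity) (pow_nonneg h1α _)
    have hfin : (1/α₀) * (1-α)^(l.length) * (y ⬝ᵥ (P *ᵥ y))
        ≤ (1/α₀) * (1-α)^(l.length) * ((1-α) * (x ⬝ᵥ ((S.Pseq Pund (i :: j :: l)) *ᵥ x))) :=
      mul_le_mul_of_nonneg_left hdecay hcoef
    have hlen : ((j :: l).length : ℕ) = l.length + 1 := rfl
    rw [hlen, pow_succ]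
    nlinarith [hI, hstep, hT, hfin]

end SwitchedLQR

section FinalAux

lemma stmt17_aux {n m M : ℕ} (hn : 0 < n) (hm : 0 < m) (hM : 0 < M)
    (S : SwitchedLQR n m M)
    (hQ : ∀ i : Fin M, (S.Q i).PosDef) (hR : ∀ i : Fin M, (S.R i).PosDef)
    (Pund : Matrix (Fin n) (Fin n) ℝ) (hPund : Pund.PosSemidef)
    (hC : S.Cond1 Pund)
    (Pbar : Matrix (Fin n) (Fin n) ℝ) (hSA : S.SA1 Pbar)
    (α : ℝ) (hα0 : 0 < α) (hα1 : α < 1)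
    (hαQ : ∀ i : Fin M, (S.Q i - α • Pbar).PosSemidef)
    (α₀ : ℝ) (hα₀ : 0 < α₀)
    (hα₀Q : ∀ i : Fin M, (S.Q i - α₀ • (Pbar - Pund)).PosSemidef) :
    ∀ (d : ℕ), 1 < d → ∀ x : Fin n → ℝ, x ≠ 0 →
      S.Vstar x ≠ ⊤ ∧ 0 < (S.Vstar x).toReal ∧
      ((S.Vstar x).toReal - S.Vd Pund d x) / (S.Vstar x).toReal ≤
        1 / α₀ * (1 - α) ^ (d - 1) := by
  intro d hd x hx
  have hVne := S.Vstar_ne_top hSA x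
  have hqpos : 0 < x ⬝ᵥ (Pbar *ᵥ x) := pd_q hSA.1 hx
  have hVlb : α * (x ⬝ᵥ (Pbar *ᵥ x)) ≤ (S.Vstar x).toReal := by
    have h1 := S.Vstar_ge_alpha hαQ hR x
    have h2 := ENNReal.toReal_mono hVne h1
    rwa [ENNReal.toReal_ofReal (by positivity)] at h2
  have hVpos : 0 < (S.Vstar x).toReal := lt_of_lt_of_le (by positivity) hVlb
  refine ⟨hVne, hVpos, ?_⟩
  obtain ⟨l, hl, hE⟩ := S.Vd_attain hM Pund d x
  have hW : x ⬝ᵥ ((S.Pseq Pund l) *ᵥ x) ≤ (S.Vstar x).toReal := by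
    rw [← hE]
    exact S.Vd_le_Vstar hn hM hQ hR hPund hC hSA hα0 hαQ d x
  cases l with
  | nil => simp at hl; omega
  | cons i l' =>
    have hclaim := S.main_claim hQ hR hPund hC hSA hα0 hα1 hαQ hα₀ hα₀Q l' i x hW
    have hlen : l'.length = d - 1 := by
      simp only [List.length_cons] at hl
      omega
    rw [hlen] at hclaim
    rw [hE, div_le_iff₀ hVpos]
    have h1α : (0:ℝ) ≤ 1 - α := by linarith
    have hmono : 1/α₀ * (1-α)^(d-1) * (x ⬝ᵥ ((S.Pseq Pund (i :: l')) *ᵥ x))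
        ≤ 1/α₀ * (1-α)^(d-1) * (S.Vstar x).toReal :=
      mul_le_mul_of_nonneg_left hW (mul_nonneg (by positivity) (pow_nonneg h1α _))
    linarith

end FinalAux


/-- Proposition 5, relative near-optimality: under Condition 1 and
SA1, with `α,α₀` as in eq. (8), for every integer `d > 1` and `x ≠ 0`, `V*(x)` is
finite and strictly positive, and
`(V*(x) - V*_d(x)) / V*(x) ≤ (1/α₀)·(1-α)^{d-1}`. -/
theorem stmt17 {n m M : ℕ} (hn : 0 < n) (hm : 0 < m) (hM : 0 < M)
    (S : SwitchedLQR n m M)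
    (hQ : ∀ i : Fin M, (S.Q i).PosDef) (hR : ∀ i : Fin M, (S.R i).PosDef)
    (Pund : Matrix (Fin n) (Fin n) ℝ) (hPund : Pund.PosSemidef)
    (hC : S.Cond1 Pund)
    (Pbar : Matrix (Fin n) (Fin n) ℝ) (hSA : S.SA1 Pbar)
    (α : ℝ) (hα0 : 0 < α) (hα1 : α < 1)
    (hαQ : ∀ i : Fin M, (S.Q i - α • Pbar).PosSemidef)
    (α₀ : ℝ) (hα₀ : 0 < α₀)
    (hα₀Q : ∀ i : Fin M, (S.Q i - α₀ • (Pbar - Pund)).PosSemidef) :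
    ∀ (d : ℕ), 1 < d → ∀ x : Fin n → ℝ, x ≠ 0 →
      S.Vstar x ≠ ⊤ ∧ 0 < (S.Vstar x).toReal ∧
      ((S.Vstar x).toReal - S.Vd Pund d x) / (S.Vstar x).toReal ≤
        1 / α₀ * (1 - α) ^ (d - 1) := by
  exact stmt17_aux hn hm hM S hQ hR Pund hPund hC Pbar hSA α hα0 hα1 hαQ α₀ hα₀ hα₀Q
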